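/- Let S be a finite set, B ⊆ S with B ≠ S, and let p̄ : S → [0,1] be a probability vector on S (nonnegative entries summing to 1). Set c = Σ_{b∈B} p̄(b) and m = |S∖B|, and let d ≥ 1 be an integer. Then the minimum of Σ_{t∈S} |q(t) − p̄(t)|^d over all probability vectors q on S with q(b) = 0 for all b ∈ B equals Σ_{b∈B} p̄(b)^d + m·(c/m)^d, and it is attained by the vector q with q(b) = 0 for b ∈ B and q(t) = p̄(t) + c/m for t ∈ S∖B. -/

import Mathlib

open scoped BigOperators Classical

/-- Correctness of the oracle `force_A` for `L_d`-ball uncertainty sets: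
given a probability vector `p̄` on a finite set `S` and `B ⊆ S` with `B ≠ S`,
the minimum of `∑_{t∈S} |q(t) − p̄(t)|^d` over all probability vectors `q`
vanishing on `B` equals `∑_{b∈B} p̄(b)^d + m·(c/m)^d`, where `c = Σ_{b∈B} p̄(b)`
and `m = |S∖B|`, and it is attained by zeroing `p̄` on `B` and distributing the
mass `c` equally over `S ∖ B`. -/
theorem stmt14 {S : Type} [Fintype S] (B : Finset S) (hB : B ≠ Finset.univ)
    (pbar : S → ℝ) (hpos : ∀ t, 0 ≤ pbar t) (hsum : ∑ t, pbar t = 1)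
    (d : ℕ) (hd : 1 ≤ d) :
    letI c : ℝ := ∑ b ∈ B, pbar b
    letI m : ℕ := (Finset.univ \ B).card
    letI q : S → ℝ := fun t => if t ∈ B then 0 else pbar t + c / m
    (∀ t, 0 ≤ q t) ∧ (∑ t, q t = 1) ∧ (∀ b ∈ B, q b = 0) ∧
      (∑ t, |q t - pbar t| ^ d = ∑ b ∈ B, pbar b ^ d + m * (c / m) ^ d) ∧
      IsLeast
        {x : ℝ | ∃ r : S → ℝ, (∀ t, 0 ≤ r t) ∧ (∑ t, r t = 1) ∧
          (∀ b ∈ B, r b = 0) ∧ x = ∑ t, |r t - pbar t| ^ d}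
        (∑ b ∈ B, pbar b ^ d + m * (c / m) ^ d) := by
  set c : ℝ := ∑ b ∈ B, pbar b with hcdef
  set m : ℕ := (Finset.univ \ B).card with hmdef
  set q : S → ℝ := fun t => if t ∈ B then 0 else pbar t + c / m with hqdef
  have hm : 0 < m := by
    refine Finset.card_pos.mpr ?_
    rw [Finset.sdiff_nonempty]
    exact fun h => hB (Finset.univ_subset_iff.mp h)
  have hmR : (0:ℝ) < (m:ℝ) := by exact_mod_cast hm
  have hc0 : 0 ≤ c := Finset.sum_nonneg fun i _ => hpos i
  have hsplit : ∀ f : S → ℝ,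
      ∑ t, f t = ∑ t ∈ Finset.univ \ B, f t + ∑ t ∈ B, f t :=
    fun f => (Finset.sum_sdiff (Finset.subset_univ B)).symm
  have hAB : ∑ t ∈ Finset.univ \ B, pbar t = 1 - c := by
    have := hsplit pbar
    rw [hsum] at this
    linarith
  have hq0 : ∀ t, 0 ≤ q t := by
    intro t
    simp only [hqdef]
    split
    · exact le_refl 0
    · exact add_nonneg (hpos t) (div_nonneg hc0 hmR.le)
  have hqsum : ∑ t, q t = 1 := by
    rw [hsplit q]
    have h1 : ∑ t ∈ Finset.univ \ B, q t
        = ∑ t ∈ Finset.univ \ B, (pbar t + c / m) := by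
      refine Finset.sum_congr rfl fun t ht => ?_
      simp only [hqdef, if_neg (Finset.mem_sdiff.mp ht).2]
    have h2 : ∑ t ∈ B, q t = 0 := by
      refine Finset.sum_eq_zero fun t ht => ?_
      simp only [hqdef, if_pos ht]
    rw [h1, h2, Finset.sum_add_distrib, hAB, Finset.sum_const]
    field_simp
    have hmc : ((Finset.univ \ B).card : ℝ) * (c / m) = c := by
      rw [← hmdef]; field_simp [hmR.ne']
    rw [nsmul_eq_mul, hmc]; ring
  have hqB : ∀ b ∈ B, q b = 0 := fun b hb => by simp only [hqdef, if_pos hb]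
  have hqval : ∑ t, |q t - pbar t| ^ d = ∑ b ∈ B, pbar b ^ d + m * (c / m) ^ d := by
    rw [hsplit fun t => |q t - pbar t| ^ d]
    have h1 : ∑ t ∈ Finset.univ \ B, |q t - pbar t| ^ d
        = ∑ t ∈ Finset.univ \ B, (c / m) ^ d := by
      refine Finset.sum_congr rfl fun t ht => ?_
      rw [show q t = pbar t + c / m by simp only [hqdef, if_neg (Finset.mem_sdiff.mp ht).2]]
      rw [show pbar t + c / m - pbar t = c / m by ring, abs_of_nonneg (by positivity)]
    have h2 : ∑ t ∈ B, |q t - pbar t| ^ d = ∑ b ∈ B, pbar b ^ d := by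
      refine Finset.sum_congr rfl fun t ht => ?_
      rw [hqB t ht, zero_sub, abs_neg, abs_of_nonneg (hpos t)]
    rw [h1, h2, Finset.sum_const, nsmul_eq_mul]
    ring
  refine ⟨hq0, hqsum, hqB, hqval, ⟨q, hq0, hqsum, hqB, hqval.symm⟩, ?_⟩
  rintro x ⟨r, hr0, hr1, hrB, rfl⟩
  obtain ⟨n, rfl⟩ : ∃ n, d = n + 1 := ⟨d - 1, by omega⟩
  rw [hsplit fun t => |r t - pbar t| ^ (n + 1)]
  have h2 : ∑ t ∈ B, |r t - pbar t| ^ (n + 1) = ∑ b ∈ B, pbar b ^ (n + 1) := by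
    refine Finset.sum_congr rfl fun t ht => ?_
    rw [hrB t ht, zero_sub, abs_neg, abs_of_nonneg (hpos t)]
  rw [h2]
  have hrA : ∑ t ∈ Finset.univ \ B, r t = 1 := by
    have := hsplit r
    rw [hr1, Finset.sum_eq_zero hrB] at this
    linarith
  have hsum_diff : ∑ t ∈ Finset.univ \ B, (r t - pbar t) = c := by
    rw [Finset.sum_sub_distrib, hrA, hAB]; ring
  have hcle : c ≤ ∑ t ∈ Finset.univ \ B, |r t - pbar t| := by
    calc c = ∑ t ∈ Finset.univ \ B, (r t - pbar t) := hsum_diff.symm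
    _ ≤ ∑ t ∈ Finset.univ \ B, |r t - pbar t| :=
        Finset.sum_le_sum fun t _ => le_abs_self _
  have hjensen := pow_sum_div_card_le_sum_pow
    (s := Finset.univ \ B) (f := fun t => |r t - pbar t|)
    (fun i _ => abs_nonneg _) n
  have hpow : c ^ (n + 1) ≤ (∑ t ∈ Finset.univ \ B, |r t - pbar t|) ^ (n + 1) :=
    pow_le_pow_left₀ hc0 hcle _
  have key : (m : ℝ) * (c / m) ^ (n + 1)
      ≤ ∑ t ∈ Finset.univ \ B, |r t - pbar t| ^ (n + 1) := by
    have : (m : ℝ) * (c / m) ^ (n + 1) = c ^ (n + 1) / (m : ℝ) ^ n := by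
      rw [div_pow, eq_div_iff (pow_ne_zero _ hmR.ne'), pow_succ (m:ℝ) n]
      field_simp [hmR.ne']
    rw [this]
    calc c ^ (n + 1) / (m : ℝ) ^ n
        ≤ (∑ t ∈ Finset.univ \ B, |r t - pbar t|) ^ (n + 1) / (m : ℝ) ^ n :=
          by gcongr
    _ ≤ _ := by simpa [hmdef] using hjensen
  linarith
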